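/- Let m(r) := √2·r − (3/(2√2))·log r. There exist a constant ρ > 0 and r₀ ≥ 2 such that for all r ≥ r₀ and all X > 1, e^{r} ∫_{−1}^{0} (1/√(2πr)) · e^{−(X + m(r) − y)²/(2r)} · (1 − e^{−2(y+1)X/r}) dy ≤ ρ · X · exp(−√2·X − X²/(2r) + (3/(2√2))·X·(log r)/r). -/

import Mathlib

open MeasureTheory Real Set

noncomputable def bbmFront (r : ℝ) : ℝ :=
  Real.sqrt 2 * r - 3 / (2 * Real.sqrt 2) * Real.log r

set_option maxHeartbeats 2000000 in
theorem stmt_2 :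
    ∃ ρ > (0 : ℝ), ∃ r₀ ≥ (2 : ℝ), ∀ r ≥ r₀, ∀ X > (1 : ℝ),
      Real.exp r *
        ∫ y in (-1 : ℝ)..0,
          (1 / Real.sqrt (2 * Real.pi * r)) *
            Real.exp (-(X + bbmFront r - y) ^ 2 / (2 * r)) *
              (1 - Real.exp (-2 * (y + 1) * X / r))
      ≤ ρ * X * Real.exp (-Real.sqrt 2 * X - X ^ 2 / (2 * r) +
          3 / (2 * Real.sqrt 2) * X * Real.log r / r) := by
  refine ⟨Real.exp 2, Real.exp_pos 2, 2, le_refl 2, fun r hr X hX => ?_⟩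
  have hr0 : (0:ℝ) < r := by linarith
  have hX0 : (0:ℝ) < X := by linarith
  have hs2 : Real.sqrt 2 ^ 2 = 2 := Real.sq_sqrt (by norm_num)
  set s := Real.sqrt 2 with hs
  have hs0 : 0 < s := Real.sqrt_pos.mpr (by norm_num)
  have hs1 : 1 ≤ s := by nlinarith
  have hs32 : s ≤ 3/2 := by nlinarith
  set L := Real.log r with hLdef
  have hL0 : 0 ≤ L := Real.log_nonneg (by linarith)
  have hLr : L ≤ r := by
    have := Real.log_le_sub_one_of_pos hr0
    linarith
  have hc : 3/(2*s) = 3*s/4 := by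
    field_simp
    nlinarith
  have hm : bbmFront r = s*r - 3*s/4*L := by
    simp only [bbmFront, ← hs, ← hLdef, hc]
  have hpi : (0:ℝ) < π := Real.pi_pos
  have h2pi : (2:ℝ) ≤ Real.sqrt (2*π) := by
    have h4 : (4:ℝ) ≤ 2*π := by nlinarith [Real.pi_gt_three]
    calc (2:ℝ) = Real.sqrt 4 := by
          rw [show (4:ℝ) = 2^2 by norm_num, Real.sqrt_sq]; norm_num
      _ ≤ Real.sqrt (2*π) := Real.sqrt_le_sqrt h4
  have hpt : ∀ y ∈ Icc (-1:ℝ) 0,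
      Real.exp r * ((1 / Real.sqrt (2 * π * r)) *
          Real.exp (-(X + bbmFront r - y) ^ 2 / (2 * r)) *
            (1 - Real.exp (-2 * (y + 1) * X / r)))
      ≤ Real.exp 2 * X * Real.exp (-s * X - X ^ 2 / (2 * r) +
          3 / (2 * s) * X * L / r) := by
    rintro y ⟨hy1, hy0⟩
    have hu : 1 - Real.exp (-2*(y+1)*X/r) ≤ 2*X/r := by
      have h1 := Real.add_one_le_exp (-(2*(y+1)*X/r))
      have h2 : Real.exp (-2 * (y + 1) * X / r) = Real.exp (-(2*(y+1)*X/r)) := by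
        ring_nf
      have h3 : 2*(y+1)*X/r ≤ 2*X/r := by
        rw [div_le_div_iff₀ hr0 hr0]
        nlinarith [mul_nonneg (mul_nonneg (neg_nonneg.mpr hy0) hX0.le) hr0.le]
      rw [h2]; linarith
    have hden : 0 ≤ (1 / Real.sqrt (2 * π * r)) *
        Real.exp (-(X + bbmFront r - y) ^ 2 / (2 * r)) := by positivity
    have step1 : Real.exp r * ((1 / Real.sqrt (2 * π * r)) *
          Real.exp (-(X + bbmFront r - y) ^ 2 / (2 * r)) *
            (1 - Real.exp (-2 * (y + 1) * X / r)))
        ≤ Real.exp r * ((1 / Real.sqrt (2 * π * r)) *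
          Real.exp (-(X + bbmFront r - y) ^ 2 / (2 * r)) * (2*X/r)) := by
      apply mul_le_mul_of_nonneg_left _ (Real.exp_nonneg r)
      exact mul_le_mul_of_nonneg_left hu hden
    have hsqrtr : Real.sqrt r = Real.exp (L/2) := by
      have h : Real.exp (L/2)^2 = r := by
        rw [sq, ← Real.exp_add, show L/2 + L/2 = L by ring, hLdef, Real.exp_log hr0]
      rw [← h, Real.sqrt_sq (Real.exp_pos _).le]
    have hrexp : Real.exp L = r := by rw [hLdef, Real.exp_log hr0]
    have hrw : Real.exp r * ((1 / Real.sqrt (2 * π * r)) *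
          Real.exp (-(X + bbmFront r - y) ^ 2 / (2 * r)) * (2*X/r))
        = 2/Real.sqrt (2*π) * X *
            Real.exp (r - L/2 - (X + bbmFront r - y)^2/(2*r) - L) := by
      rw [Real.sqrt_mul (by positivity) r, hsqrtr]
      rw [show -(X + bbmFront r - y) ^ 2 / (2 * r)
            = -((X + bbmFront r - y) ^ 2 / (2 * r)) by ring]
      rw [show r - L/2 - (X + bbmFront r - y)^2/(2*r) - L
            = r + (-(L/2) + (-((X + bbmFront r - y)^2/(2*r)) + -L)) by ring]
      rw [Real.exp_add, Real.exp_add, Real.exp_add, Real.exp_neg, Real.exp_neg,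
        Real.exp_neg, hrexp]
      have e1 : Real.sqrt (2*π) ≠ 0 := by positivity
      have e2 : (r:ℝ) ≠ 0 := ne_of_gt hr0
      field_simp
    have hsq : (X + (s*r - 3*s/4*L) - y)^2
        = 2*r^2 - 3*r*L + 9/8*L^2 + X^2 + y^2 + 2*s*r*X - 3*s/2*X*L - 2*X*y
            - 2*s*r*y + 3*s/2*y*L := by
      linear_combination (r^2 + 9/16*L^2 - 3/2*r*L) * hs2
    have hG : r - L/2 - (X + bbmFront r - y)^2/(2*r) - L
        ≤ 2 + (-s * X - X ^ 2 / (2 * r) + 3 / (2 * s) * X * L / r) := by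
      rw [hm, hc, hsq]
      have hexpand : (2 + (-s * X - X ^ 2 / (2 * r) + 3*s/4 * X * L / r))
          - (r - L/2 - (2*r^2 - 3*r*L + 9/8*L^2 + X^2 + y^2 + 2*s*r*X
              - 3*s/2*X*L - 2*X*y - 2*s*r*y + 3*s/2*y*L)/(2*r) - L)
          = 2 + (9/16)*L^2/r + y^2/(2*r) + (-(X*y))/r + (-(s*y))
              + (3*s/4*(y*L))/r := by
        field_simp
        ring
      have t1 : 0 ≤ (9/16)*L^2/r := by positivity
      have t2 : 0 ≤ y^2/(2*r) := by positivity
      have t3 : 0 ≤ (-(X*y))/r := by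
        apply div_nonneg _ hr0.le; nlinarith
      have t4 : 0 ≤ -(s*y) := by nlinarith
      have t5 : -2 ≤ (3*s/4*(y*L))/r := by
        rw [neg_le, ← neg_div, div_le_iff₀ hr0]
        nlinarith [mul_nonneg hL0 (neg_nonneg.mpr hy0)]
      linarith
    have hexple : Real.exp (r - L/2 - (X + bbmFront r - y)^2/(2*r) - L)
        ≤ Real.exp (2 + (-s * X - X ^ 2 / (2 * r) + 3 / (2 * s) * X * L / r)) :=
      Real.exp_le_exp.mpr hG
    have hfrac : 2/Real.sqrt (2*π) ≤ 1 := by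
      rw [div_le_one (by linarith)]; linarith
    calc Real.exp r * ((1 / Real.sqrt (2 * π * r)) *
          Real.exp (-(X + bbmFront r - y) ^ 2 / (2 * r)) *
            (1 - Real.exp (-2 * (y + 1) * X / r)))
        ≤ Real.exp r * ((1 / Real.sqrt (2 * π * r)) *
          Real.exp (-(X + bbmFront r - y) ^ 2 / (2 * r)) * (2*X/r)) := step1
      _ = 2/Real.sqrt (2*π) * X *
            Real.exp (r - L/2 - (X + bbmFront r - y)^2/(2*r) - L) := hrw
      _ ≤ 1 * X * Real.exp (2 + (-s * X - X ^ 2 / (2 * r)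
            + 3 / (2 * s) * X * L / r)) := by
          apply mul_le_mul (mul_le_mul_of_nonneg_right hfrac hX0.le) hexple
            (Real.exp_nonneg _) (by positivity)
      _ = Real.exp 2 * X * Real.exp (-s * X - X ^ 2 / (2 * r)
            + 3 / (2 * s) * X * L / r) := by
          rw [Real.exp_add]; ring
  have hcont : Continuous (fun y : ℝ => (1 / Real.sqrt (2 * π * r)) *
      Real.exp (-(X + bbmFront r - y) ^ 2 / (2 * r)) *
        (1 - Real.exp (-2 * (y + 1) * X / r))) := by
    fun_prop
  calc Real.exp r * ∫ y in (-1:ℝ)..0,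
        (1 / Real.sqrt (2 * π * r)) *
          Real.exp (-(X + bbmFront r - y) ^ 2 / (2 * r)) *
            (1 - Real.exp (-2 * (y + 1) * X / r))
      = ∫ y in (-1:ℝ)..0, Real.exp r * ((1 / Real.sqrt (2 * π * r)) *
          Real.exp (-(X + bbmFront r - y) ^ 2 / (2 * r)) *
            (1 - Real.exp (-2 * (y + 1) * X / r))) := by
        rw [← intervalIntegral.integral_const_mul]
    _ ≤ ∫ _y in (-1:ℝ)..0, (Real.exp 2 * X * Real.exp (-s * X - X ^ 2 / (2 * r) +
          3 / (2 * s) * X * L / r)) := by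
        apply intervalIntegral.integral_mono_on (by norm_num)
          ((continuous_const.mul hcont).intervalIntegrable _ _)
          intervalIntegrable_const
        intro y hy
        exact hpt y hy
    _ = Real.exp 2 * X * Real.exp (-s * X - X ^ 2 / (2 * r) +
          3 / (2 * s) * X * L / r) := by
        rw [intervalIntegral.integral_const]; norm_num
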